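/- arXiv:2212.06999 — 2 statements merged into one kernel-verified Lean document; each statement's English description precedes it below -/
import Mathlib

section
/- Convex combinations of Taylor homotopies are again systems of higher homotopies: let f and f' be two coefficient families with a_i = Σ_{j=1}^r f_{i,j} m_j = Σ_{j=1}^r f'_{i,j} m_j for each i, and let λ ∈ 𝕜. Then for each i, λ·σ_i^f + (1−λ)·σ_i^{f'} equals σ_i^{g} where g_{i,j} = λ f_{i,j} + (1−λ) f'_{i,j}, and the collection with σ_𝟎 = τ, σ_{e_i} = λ·σ_i^f + (1−λ)·σ_i^{f'}, and σ_u = 0 for |u| ≥ 2 is a system of higher homotopies for a₁,…,a_c on the Taylor complex T (it satisfies: τ∘τ = 0; τ∘σ_{e_j} + σ_{e_j}∘τ = a_j·id for each j; and Σ_{b+b'=u} σ_b∘σ_{b'} = 0 for all |u| ≥ 2). -/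
open MvPolynomial

set_option maxHeartbeats 2000000
set_option synthInstance.maxHeartbeats 1000000

/-- The position `p_{t,S}` of `t` in `S ∪ {t}`: one plus the number of elements of `S`
smaller than `t`. -/
def taylorPos {r : ℕ} (S : Finset (Fin r)) (t : Fin r) : ℕ :=
  (S.filter fun s => s < t).card + 1

variable (𝕜 : Type*) [Field 𝕜] {n r : ℕ}

/-- `m_S`: the lcm of the monomials `m_j = x^{v j}` for `j ∈ S` (equal to `1` when `S = ∅`). -/
noncomputable def taylorLcm (v : Fin r → (Fin n →₀ ℕ)) (S : Finset (Fin r)) :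
    MvPolynomial (Fin n) 𝕜 :=
  monomial (S.sup v) 1

/-- The matrix entry of the Taylor differential: `(-1)^{k-i} m_S / m_{S∖{s}}`
(where `i = p_{s,S}` is the position of `s` in `S` and `k = |S|`). -/
noncomputable def taylorEntry (v : Fin r → (Fin n →₀ ℕ)) (S : Finset (Fin r)) (s : Fin r) :
    MvPolynomial (Fin n) 𝕜 :=
  (-1) ^ (S.card - taylorPos S s) * monomial (S.sup v - (S.erase s).sup v) 1

/-- The matrix entry of the homotopy `σ`:
`(-1)^{k - p_{t,S} - 1} f_t m_t m_S / m_{S ∪ {t}}` (where `k = |S|`); the sign is written as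
`(-1)^{k + p_{t,S} + 1}`, which agrees with `(-1)^{k - p_{t,S} - 1}` since the exponents have
the same parity. -/
noncomputable def htpyEntry (v : Fin r → (Fin n →₀ ℕ)) (f : Fin r → MvPolynomial (Fin n) 𝕜)
    (S : Finset (Fin r)) (t : Fin r) : MvPolynomial (Fin n) 𝕜 :=
  (-1) ^ (S.card + taylorPos S t + 1) *
    (f t * monomial (v t + S.sup v - (insert t S).sup v) 1)

/-- The total module of the Taylor complex: the free `Q`-module with basis
`{ε_S : S ⊆ {1,…,r}}`; the basis element `ε_S` is `Finsupp.single S 1`. -/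
abbrev TaylorModule (n r : ℕ) := Finset (Fin r) →₀ MvPolynomial (Fin n) 𝕜

/-- The Taylor differential `τ` on the total module,
`τ(ε_S) = Σ_{s ∈ S} (-1)^{|S| - p_{s,S}} (m_S / m_{S∖{s}}) ε_{S∖{s}}`. -/
noncomputable def taylorTau (v : Fin r → (Fin n →₀ ℕ)) :
    TaylorModule 𝕜 n r →ₗ[MvPolynomial (Fin n) 𝕜] TaylorModule 𝕜 n r :=
  Finsupp.lsum (MvPolynomial (Fin n) 𝕜) fun S =>
    LinearMap.toSpanSingleton _ _
      (∑ s ∈ S, Finsupp.single (S.erase s) (taylorEntry 𝕜 v S s))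

/-- The homotopy `σ` attached to a coefficient family `f` (with `a = Σ_j f_j m_j`):
`σ(ε_S) = Σ_{t ∉ S} (-1)^{|S| - p_{t,S} - 1} (f_t m_t m_S / m_{S∪{t}}) ε_{S∪{t}}`. -/
noncomputable def taylorHtpy (v : Fin r → (Fin n →₀ ℕ)) (f : Fin r → MvPolynomial (Fin n) 𝕜) :
    TaylorModule 𝕜 n r →ₗ[MvPolynomial (Fin n) 𝕜] TaylorModule 𝕜 n r :=
  Finsupp.lsum (MvPolynomial (Fin n) 𝕜) fun S =>
    LinearMap.toSpanSingleton _ _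
      (∑ t ∈ Sᶜ, Finsupp.single (insert t S) (htpyEntry 𝕜 v f S t))

/-- The collection of maps with `σ_𝟎 = τ`, `σ_{e_i}` a prescribed map `σs i`, and `σ_u = 0`
for `|u| ≥ 2` (indices `u ∈ ℕ^c` are encoded as `Fin c →₀ ℕ`). -/
noncomputable def homotopySystem {𝕜 : Type*} [Field 𝕜] {n r c : ℕ}
    (v : Fin r → (Fin n →₀ ℕ))
    (σs : Fin c →
      (TaylorModule 𝕜 n r →ₗ[MvPolynomial (Fin n) 𝕜] TaylorModule 𝕜 n r))
    (u : Fin c →₀ ℕ) :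
    TaylorModule 𝕜 n r →ₗ[MvPolynomial (Fin n) 𝕜] TaylorModule 𝕜 n r :=
  if u = 0 then taylorTau 𝕜 v
  else ∑ i : Fin c, if u = Finsupp.single i 1 then σs i else 0

section Aux

open Finset

variable {r : ℕ}

lemma taylorPos_pos (S : Finset (Fin r)) (t : Fin r) : 1 ≤ taylorPos S t :=
  Nat.le_add_left 1 _

lemma taylorPos_le_card_succ (S : Finset (Fin r)) (t : Fin r) :
    taylorPos S t ≤ S.card + 1 := by
  have := Finset.card_le_card (Finset.filter_subset (fun s => s < t) S)
  unfold taylorPos; omega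

lemma taylorPos_le_card {S : Finset (Fin r)} {s : Fin r} (hs : s ∈ S) :
    taylorPos S s ≤ S.card := by
  have hsub : (S.filter fun x => x < s) ⊆ S.erase s := by
    intro x hx
    rw [Finset.mem_filter] at hx
    exact Finset.mem_erase.2 ⟨ne_of_lt hx.2, hx.1⟩
  have h1 := Finset.card_le_card hsub
  have h2 : (S.erase s).card = S.card - 1 := Finset.card_erase_of_mem hs
  have h3 : 1 ≤ S.card := Finset.card_pos.2 ⟨s, hs⟩
  unfold taylorPos; omega

lemma taylorPos_lt_card {S : Finset (Fin r)} {s s' : Fin r} (hs : s ∈ S) (hs' : s' ∈ S)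
    (h : s < s') : taylorPos S s < S.card := by
  have hsub : (S.filter fun x => x < s) ⊆ (S.erase s).erase s' := by
    intro x hx
    rw [Finset.mem_filter] at hx
    exact Finset.mem_erase.2 ⟨ne_of_lt (lt_trans hx.2 h),
      Finset.mem_erase.2 ⟨ne_of_lt hx.2, hx.1⟩⟩
  have h1 := Finset.card_le_card hsub
  have h2 : ((S.erase s).erase s').card = (S.erase s).card - 1 :=
    Finset.card_erase_of_mem (Finset.mem_erase.2 ⟨(ne_of_lt h).symm, hs'⟩)
  have h3 : (S.erase s).card = S.card - 1 := Finset.card_erase_of_mem hs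
  have h4 : 2 ≤ S.card := Finset.one_lt_card.2 ⟨s, hs, s', hs', ne_of_lt h⟩
  unfold taylorPos; omega

lemma taylorPos_insert_self (t : Fin r) (S : Finset (Fin r)) :
    taylorPos (insert t S) t = taylorPos S t := by
  unfold taylorPos
  rw [Finset.filter_insert, if_neg (lt_irrefl t)]

lemma taylorPos_insert {S : Finset (Fin r)} {t s : Fin r} (ht : t ∉ S) (hne : t ≠ s) :
    taylorPos (insert t S) s = taylorPos S s + (if t < s then 1 else 0) := by
  unfold taylorPos
  rw [Finset.filter_insert]
  split_ifs with h
  · rw [Finset.card_insert_of_notMem (fun hx => ht (Finset.mem_of_mem_filter _ hx))]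
  · omega

lemma taylorPos_erase_self (S : Finset (Fin r)) (s : Fin r) :
    taylorPos (S.erase s) s = taylorPos S s := by
  unfold taylorPos
  rw [Finset.filter_erase, Finset.erase_eq_of_notMem]
  intro hx
  exact lt_irrefl s (Finset.mem_filter.1 hx).2

lemma taylorPos_erase {S : Finset (Fin r)} {s t : Fin r} (hs : s ∈ S) (hne : s ≠ t) :
    taylorPos S t = taylorPos (S.erase s) t + (if s < t then 1 else 0) := by
  conv_lhs => rw [← Finset.insert_erase hs]
  rw [taylorPos_insert (Finset.notMem_erase s S) hne]

lemma neg_one_pow_opp {R : Type*} [Monoid R] [HasDistribNeg R] {m k : ℕ}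
    (h : (m + k) % 2 = 1) : ((-1 : R) ^ m = -(-1) ^ k) := by
  rcases Nat.even_or_odd m with hm | hm <;> rcases Nat.even_or_odd k with hk | hk
  · exfalso; rw [Nat.even_iff] at hm hk; omega
  · rw [hm.neg_one_pow, hk.neg_one_pow, neg_neg]
  · rw [hm.neg_one_pow, hk.neg_one_pow]
  · exfalso; rw [Nat.odd_iff] at hm hk; omega

lemma neg_one_pow_even {R : Type*} [Monoid R] [HasDistribNeg R] {m : ℕ}
    (h : m % 2 = 0) : ((-1 : R) ^ m = 1) :=
  (Nat.even_iff.2 h).neg_one_pow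

end Aux
section Aux2

open Finset

variable {v : Fin r → (Fin n →₀ ℕ)}

lemma entry_mul_tt (e1 e2 : ℕ) (W1 W2 : Fin n →₀ ℕ) :
    ((-1 : MvPolynomial (Fin n) 𝕜) ^ e1 * monomial W1 1) * ((-1) ^ e2 * monomial W2 1)
      = (-1) ^ (e1 + e2) * monomial (W1 + W2) 1 := by
  have h : (monomial W1 (1 : 𝕜)) * monomial W2 1 = monomial (W1 + W2) 1 := by
    rw [monomial_mul, one_mul]
  calc ((-1 : MvPolynomial (Fin n) 𝕜) ^ e1 * monomial W1 1) * ((-1) ^ e2 * monomial W2 1)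
      = ((-1 : MvPolynomial (Fin n) 𝕜) ^ e1 * (-1) ^ e2) * (monomial W1 1 * monomial W2 1) := by
        ring
    _ = _ := by rw [h, pow_add]

lemma entry_mul_ht (e1 e2 : ℕ) (c : MvPolynomial (Fin n) 𝕜) (W1 W2 : Fin n →₀ ℕ) :
    ((-1) ^ e1 * (c * monomial W1 1)) * ((-1) ^ e2 * monomial W2 1)
      = (-1) ^ (e1 + e2) * (c * monomial (W1 + W2) 1) := by
  have h : (monomial W1 (1 : 𝕜)) * monomial W2 1 = monomial (W1 + W2) 1 := by
    rw [monomial_mul, one_mul]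
  calc ((-1 : MvPolynomial (Fin n) 𝕜) ^ e1 * (c * monomial W1 1)) * ((-1) ^ e2 * monomial W2 1)
      = ((-1 : MvPolynomial (Fin n) 𝕜) ^ e1 * (-1) ^ e2) * (c * (monomial W1 1 * monomial W2 1)) := by
        ring
    _ = _ := by rw [h, pow_add]

lemma entry_mul_th (e1 e2 : ℕ) (c : MvPolynomial (Fin n) 𝕜) (W1 W2 : Fin n →₀ ℕ) :
    ((-1) ^ e1 * monomial W1 1) * ((-1) ^ e2 * (c * monomial W2 1))
      = (-1) ^ (e1 + e2) * (c * monomial (W1 + W2) 1) := by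
  have h : (monomial W1 (1 : 𝕜)) * monomial W2 1 = monomial (W1 + W2) 1 := by
    rw [monomial_mul, one_mul]
  calc ((-1 : MvPolynomial (Fin n) 𝕜) ^ e1 * monomial W1 1) * ((-1) ^ e2 * (c * monomial W2 1))
      = ((-1 : MvPolynomial (Fin n) 𝕜) ^ e1 * (-1) ^ e2) * (c * (monomial W1 1 * monomial W2 1)) := by
        ring
    _ = _ := by rw [h, pow_add]

lemma entry_mul_hh (e1 e2 : ℕ) (c c' : MvPolynomial (Fin n) 𝕜) (W1 W2 : Fin n →₀ ℕ) :
    ((-1) ^ e1 * (c * monomial W1 1)) * ((-1) ^ e2 * (c' * monomial W2 1))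
      = (-1) ^ (e1 + e2) * (c * c' * monomial (W1 + W2) 1) := by
  have h : (monomial W1 (1 : 𝕜)) * monomial W2 1 = monomial (W1 + W2) 1 := by
    rw [monomial_mul, one_mul]
  calc ((-1 : MvPolynomial (Fin n) 𝕜) ^ e1 * (c * monomial W1 1)) * ((-1) ^ e2 * (c' * monomial W2 1))
      = ((-1 : MvPolynomial (Fin n) 𝕜) ^ e1 * (-1) ^ e2) * (c * c' * (monomial W1 1 * monomial W2 1)) := by
        ring
    _ = _ := by rw [h, pow_add]

lemma tE_anticomm {S : Finset (Fin r)} {s s' : Fin r} (hs : s ∈ S) (hs' : s' ∈ S.erase s) :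
    taylorEntry 𝕜 v S s * taylorEntry 𝕜 v (S.erase s) s'
      + taylorEntry 𝕜 v S s' * taylorEntry 𝕜 v (S.erase s') s = 0 := by
  have hs'S : s' ∈ S := Finset.mem_of_mem_erase hs'
  have hne : s' ≠ s := Finset.ne_of_mem_erase hs'
  unfold taylorEntry
  rw [entry_mul_tt, entry_mul_tt]
  have hee : (S.erase s').erase s = (S.erase s).erase s' := Finset.erase_right_comm
  have h1 : (S.erase s).sup v = v s' ⊔ ((S.erase s).erase s').sup v := by
    conv_lhs => rw [← Finset.insert_erase hs']
    rw [Finset.sup_insert]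
  have h2 : (S.erase s').sup v = v s ⊔ ((S.erase s).erase s').sup v := by
    conv_lhs => rw [← Finset.insert_erase (Finset.mem_erase.2 ⟨fun h => hne h.symm, hs⟩)]
    rw [Finset.sup_insert, hee]
  have h3 : S.sup v = v s ⊔ (v s' ⊔ ((S.erase s).erase s').sup v) := by
    conv_lhs => rw [← Finset.insert_erase hs]
    rw [Finset.sup_insert, h1]
  have hW : (S.sup v - (S.erase s).sup v) + ((S.erase s).sup v - ((S.erase s).erase s').sup v)
      = (S.sup v - (S.erase s').sup v) + ((S.erase s').sup v - ((S.erase s').erase s).sup v) := by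
    rw [hee, h1, h2, h3]
    ext x
    simp only [Finsupp.add_apply, Finsupp.tsub_apply, Finsupp.sup_apply]
    omega
  have hsgn : ((-1 : MvPolynomial (Fin n) 𝕜)) ^
        ((S.card - taylorPos S s) + ((S.erase s).card - taylorPos (S.erase s) s'))
      = -(-1) ^ ((S.card - taylorPos S s') + ((S.erase s').card - taylorPos (S.erase s') s)) := by
    apply neg_one_pow_opp
    have c1 : (S.erase s).card = S.card - 1 := Finset.card_erase_of_mem hs
    have c2 : (S.erase s').card = S.card - 1 := Finset.card_erase_of_mem hs'S
    have p1 : taylorPos S s' = taylorPos (S.erase s) s' + (if s < s' then 1 else 0) :=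
      taylorPos_erase hs (fun h => hne h.symm)
    have p2 : taylorPos S s = taylorPos (S.erase s') s + (if s' < s then 1 else 0) :=
      taylorPos_erase hs'S hne
    have b1 : taylorPos S s ≤ S.card := taylorPos_le_card hs
    have b2 : taylorPos S s' ≤ S.card := taylorPos_le_card hs'S
    have g1 := taylorPos_pos S s
    have g2 := taylorPos_pos S s'
    rcases lt_or_gt_of_ne hne with h | h
    · -- s' < s
      rw [if_neg (asymm h)] at p1
      rw [if_pos h] at p2
      have sharp := taylorPos_lt_card hs'S hs h
      omega
    · -- s < s'
      rw [if_pos h] at p1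
      rw [if_neg (asymm h)] at p2
      have sharp := taylorPos_lt_card hs hs'S h
      omega
  rw [hW, hsgn]
  ring

end Aux2
section Aux3

open Finset

variable {v : Fin r → (Fin n →₀ ℕ)} {g h : Fin r → MvPolynomial (Fin n) 𝕜}

lemma cross_cancel {S : Finset (Fin r)} {s t : Fin r} (hs : s ∈ S) (ht : t ∉ S) :
    htpyEntry 𝕜 v g S t * taylorEntry 𝕜 v (insert t S) s
      + taylorEntry 𝕜 v S s * htpyEntry 𝕜 v g (S.erase s) t = 0 := by
  have hne : t ≠ s := fun h => ht (h ▸ hs)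
  unfold htpyEntry taylorEntry
  rw [entry_mul_ht, entry_mul_th]
  have hC : (insert t S).erase s = insert t (S.erase s) := Finset.erase_insert_of_ne hne
  have hA : S.sup v = v s ⊔ (S.erase s).sup v := by
    conv_lhs => rw [← Finset.insert_erase hs]
    rw [Finset.sup_insert]
  have hW : (v t + S.sup v - (insert t S).sup v)
        + ((insert t S).sup v - ((insert t S).erase s).sup v)
      = (S.sup v - (S.erase s).sup v)
        + (v t + (S.erase s).sup v - (insert t (S.erase s)).sup v) := by
    rw [hC]
    simp only [Finset.sup_insert]
    rw [hA]
    ext x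
    simp only [Finsupp.add_apply, Finsupp.tsub_apply, Finsupp.sup_apply]
    omega
  have hsgn : ((-1 : MvPolynomial (Fin n) 𝕜)) ^
        ((S.card + taylorPos S t + 1) + ((insert t S).card - taylorPos (insert t S) s))
      = -(-1) ^ ((S.card - taylorPos S s)
          + ((S.erase s).card + taylorPos (S.erase s) t + 1)) := by
    apply neg_one_pow_opp
    have c1 : (insert t S).card = S.card + 1 := Finset.card_insert_of_notMem ht
    have c2 : (S.erase s).card = S.card - 1 := Finset.card_erase_of_mem hs
    have p1 : taylorPos (insert t S) s = taylorPos S s + (if t < s then 1 else 0) :=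
      taylorPos_insert ht hne
    have p2 : taylorPos S t = taylorPos (S.erase s) t + (if s < t then 1 else 0) :=
      taylorPos_erase hs (fun h => hne h.symm)
    have b1 : taylorPos S s ≤ S.card := taylorPos_le_card hs
    have b2 : taylorPos (insert t S) s ≤ (insert t S).card :=
      taylorPos_le_card (Finset.mem_insert_of_mem hs)
    have g1 := taylorPos_pos S s
    have g2 := taylorPos_pos S t
    rcases lt_or_gt_of_ne hne with hlt | hlt
    · rw [if_pos hlt] at p1; rw [if_neg (asymm hlt)] at p2; omega
    · rw [if_neg (asymm hlt)] at p1; rw [if_pos hlt] at p2; omega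
  rw [hW, hsgn]
  ring

lemma diag_t {S : Finset (Fin r)} {t : Fin r} (ht : t ∉ S) :
    htpyEntry 𝕜 v g S t * taylorEntry 𝕜 v (insert t S) t = g t * monomial (v t) 1 := by
  unfold htpyEntry taylorEntry
  rw [entry_mul_ht]
  have hE : (insert t S).erase t = S := Finset.erase_insert ht
  have hW : (v t + S.sup v - (insert t S).sup v)
        + ((insert t S).sup v - ((insert t S).erase t).sup v) = v t := by
    rw [hE]
    simp only [Finset.sup_insert]
    ext x
    simp only [Finsupp.add_apply, Finsupp.tsub_apply, Finsupp.sup_apply]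
    omega
  have hsgn : ((-1 : MvPolynomial (Fin n) 𝕜)) ^
        ((S.card + taylorPos S t + 1) + ((insert t S).card - taylorPos (insert t S) t))
      = 1 := by
    apply neg_one_pow_even
    have c1 : (insert t S).card = S.card + 1 := Finset.card_insert_of_notMem ht
    have p1 : taylorPos (insert t S) t = taylorPos S t := taylorPos_insert_self t S
    have b1 : taylorPos S t ≤ S.card + 1 := taylorPos_le_card_succ S t
    have g1 := taylorPos_pos S t
    omega
  rw [hW, hsgn, one_mul]

lemma diag_s {S : Finset (Fin r)} {s : Fin r} (hs : s ∈ S) :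
    taylorEntry 𝕜 v S s * htpyEntry 𝕜 v g (S.erase s) s = g s * monomial (v s) 1 := by
  unfold htpyEntry taylorEntry
  rw [entry_mul_th]
  have hE : insert s (S.erase s) = S := Finset.insert_erase hs
  have hA : S.sup v = v s ⊔ (S.erase s).sup v := by
    conv_lhs => rw [← hE]
    rw [Finset.sup_insert]
  have hW : (S.sup v - (S.erase s).sup v)
        + (v s + (S.erase s).sup v - (insert s (S.erase s)).sup v) = v s := by
    rw [hE, hA]
    ext x
    simp only [Finsupp.add_apply, Finsupp.tsub_apply, Finsupp.sup_apply]
    omega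
  have hsgn : ((-1 : MvPolynomial (Fin n) 𝕜)) ^
        ((S.card - taylorPos S s) + ((S.erase s).card + taylorPos (S.erase s) s + 1))
      = 1 := by
    apply neg_one_pow_even
    have c1 : (S.erase s).card = S.card - 1 := Finset.card_erase_of_mem hs
    have p1 : taylorPos (S.erase s) s = taylorPos S s := taylorPos_erase_self S s
    have b1 : taylorPos S s ≤ S.card := taylorPos_le_card hs
    have g1 := taylorPos_pos S s
    have g2 : 1 ≤ S.card := Finset.card_pos.2 ⟨s, hs⟩
    omega
  rw [hW, hsgn, one_mul]

lemma hE_anticomm {S : Finset (Fin r)} {t t' : Fin r} (ht : t ∉ S) (ht' : t' ∉ insert t S) :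
    htpyEntry 𝕜 v g S t * htpyEntry 𝕜 v h (insert t S) t'
      + htpyEntry 𝕜 v h S t' * htpyEntry 𝕜 v g (insert t' S) t = 0 := by
  have ht'S : t' ∉ S := fun hx => ht' (Finset.mem_insert_of_mem hx)
  have hne : t' ≠ t := fun hx => ht' (hx ▸ Finset.mem_insert_self t S)
  unfold htpyEntry
  rw [entry_mul_hh, entry_mul_hh]
  have hI : insert t' (insert t S) = insert t (insert t' S) := Finset.insert_comm t' t S
  have hW : (v t + S.sup v - (insert t S).sup v)
        + (v t' + (insert t S).sup v - (insert t' (insert t S)).sup v)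
      = (v t' + S.sup v - (insert t' S).sup v)
        + (v t + (insert t' S).sup v - (insert t (insert t' S)).sup v) := by
    rw [hI]
    simp only [Finset.sup_insert]
    ext x
    simp only [Finsupp.add_apply, Finsupp.tsub_apply, Finsupp.sup_apply]
    omega
  have hsgn : ((-1 : MvPolynomial (Fin n) 𝕜)) ^
        ((S.card + taylorPos S t + 1)
          + ((insert t S).card + taylorPos (insert t S) t' + 1))
      = -(-1) ^ ((S.card + taylorPos S t' + 1)
          + ((insert t' S).card + taylorPos (insert t' S) t + 1)) := by
    apply neg_one_pow_opp
    have c1 : (insert t S).card = S.card + 1 := Finset.card_insert_of_notMem ht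
    have c2 : (insert t' S).card = S.card + 1 := Finset.card_insert_of_notMem ht'S
    have p1 : taylorPos (insert t S) t' = taylorPos S t' + (if t < t' then 1 else 0) :=
      taylorPos_insert ht (fun hx => hne hx.symm)
    have p2 : taylorPos (insert t' S) t = taylorPos S t + (if t' < t then 1 else 0) :=
      taylorPos_insert ht'S hne
    rcases lt_or_gt_of_ne hne with hlt | hlt
    · rw [if_neg (asymm hlt)] at p1; rw [if_pos hlt] at p2; omega
    · rw [if_pos hlt] at p1; rw [if_neg (asymm hlt)] at p2; omega
  rw [hW, hsgn]
  ring

end Aux3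
section Aux4

open Finset

variable {v : Fin r → (Fin n →₀ ℕ)}

lemma taylorTau_single (v : Fin r → (Fin n →₀ ℕ)) (S : Finset (Fin r))
    (q : MvPolynomial (Fin n) 𝕜) :
    taylorTau 𝕜 v (Finsupp.single S q)
      = ∑ s ∈ S, Finsupp.single (S.erase s) (q * taylorEntry 𝕜 v S s) := by
  rw [taylorTau, Finsupp.lsum_single, LinearMap.toSpanSingleton_apply, Finset.smul_sum]
  simp [Finsupp.smul_single, smul_eq_mul]

lemma taylorHtpy_single (v : Fin r → (Fin n →₀ ℕ)) (f : Fin r → MvPolynomial (Fin n) 𝕜)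
    (S : Finset (Fin r)) (q : MvPolynomial (Fin n) 𝕜) :
    taylorHtpy 𝕜 v f (Finsupp.single S q)
      = ∑ t ∈ Sᶜ, Finsupp.single (insert t S) (q * htpyEntry 𝕜 v f S t) := by
  rw [taylorHtpy, Finsupp.lsum_single, LinearMap.toSpanSingleton_apply, Finset.smul_sum]
  simp [Finsupp.smul_single, smul_eq_mul]

theorem tau_comp_tau (v : Fin r → (Fin n →₀ ℕ)) :
    taylorTau 𝕜 v ∘ₗ taylorTau 𝕜 v = 0 := by
  apply Finsupp.lhom_ext
  intro S q
  rw [LinearMap.comp_apply, taylorTau_single, map_sum]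
  simp only [taylorTau_single]
  rw [Finset.sum_sigma' S (fun s => S.erase s)
    (fun s s' => Finsupp.single ((S.erase s).erase s')
      (q * taylorEntry 𝕜 v S s * taylorEntry 𝕜 v (S.erase s) s'))]
  rw [LinearMap.zero_apply]
  refine Finset.sum_involution (fun x _ => ⟨x.2, x.1⟩) ?_ ?_ ?_ ?_
  · intro x hx
    rw [Finset.mem_sigma] at hx
    have h1 : x.1 ∈ S := hx.1
    have h2 : x.2 ∈ S.erase x.1 := hx.2
    have hset : (S.erase x.1).erase x.2 = (S.erase x.2).erase x.1 := Finset.erase_right_comm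
    rw [hset, ← Finsupp.single_add]
    have : q * taylorEntry 𝕜 v S x.1 * taylorEntry 𝕜 v (S.erase x.1) x.2
        + q * taylorEntry 𝕜 v S x.2 * taylorEntry 𝕜 v (S.erase x.2) x.1
        = q * (taylorEntry 𝕜 v S x.1 * taylorEntry 𝕜 v (S.erase x.1) x.2
            + taylorEntry 𝕜 v S x.2 * taylorEntry 𝕜 v (S.erase x.2) x.1) := by ring
    rw [this, tE_anticomm 𝕜 h1 h2, mul_zero, Finsupp.single_zero]
  · intro x hx _
    rw [Finset.mem_sigma] at hx
    intro hcon
    exact Finset.ne_of_mem_erase hx.2 (congrArg Sigma.fst hcon)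
  · intro x hx
    rw [Finset.mem_sigma] at hx ⊢
    refine ⟨Finset.mem_of_mem_erase hx.2, Finset.mem_erase.2 ⟨?_, hx.1⟩⟩
    exact fun hcon => Finset.ne_of_mem_erase hx.2 hcon.symm
  · intro x hx
    rfl

end Aux4
section Aux5

open Finset

theorem tau_htpy (v : Fin r → (Fin n →₀ ℕ)) (g : Fin r → MvPolynomial (Fin n) 𝕜) :
    taylorTau 𝕜 v ∘ₗ taylorHtpy 𝕜 v g + taylorHtpy 𝕜 v g ∘ₗ taylorTau 𝕜 v
      = (∑ j : Fin r, g j * monomial (v j) 1) • LinearMap.id := by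
  apply Finsupp.lhom_ext
  intro S q
  rw [LinearMap.add_apply, LinearMap.comp_apply, LinearMap.comp_apply,
    taylorHtpy_single, taylorTau_single, map_sum, map_sum]
  simp only [taylorTau_single, taylorHtpy_single]
  have e1 : ∀ t ∈ Sᶜ,
      (∑ s ∈ insert t S, Finsupp.single ((insert t S).erase s)
          (q * htpyEntry 𝕜 v g S t * taylorEntry 𝕜 v (insert t S) s))
        = Finsupp.single S (q * (g t * monomial (v t) 1))
          + ∑ s ∈ S, Finsupp.single ((insert t S).erase s)
              (q * htpyEntry 𝕜 v g S t * taylorEntry 𝕜 v (insert t S) s) := by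
    intro t ht
    rw [Finset.mem_compl] at ht
    rw [Finset.sum_insert ht, Finset.erase_insert ht, mul_assoc, diag_t 𝕜 ht]
  have e2 : ∀ s ∈ S,
      (∑ t ∈ (S.erase s)ᶜ, Finsupp.single (insert t (S.erase s))
          (q * taylorEntry 𝕜 v S s * htpyEntry 𝕜 v g (S.erase s) t))
        = Finsupp.single S (q * (g s * monomial (v s) 1))
          + ∑ t ∈ Sᶜ, Finsupp.single (insert t (S.erase s))
              (q * taylorEntry 𝕜 v S s * htpyEntry 𝕜 v g (S.erase s) t) := by
    intro s hs
    have hc : (S.erase s)ᶜ = insert s Sᶜ := by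
      ext x
      simp only [Finset.mem_compl, Finset.mem_erase, Finset.mem_insert]
      tauto
    have hns : s ∉ Sᶜ := by simp [hs]
    rw [hc, Finset.sum_insert hns, Finset.insert_erase hs, mul_assoc, diag_s 𝕜 hs]
  rw [Finset.sum_congr rfl e1, Finset.sum_congr rfl e2,
    Finset.sum_add_distrib, Finset.sum_add_distrib]
  have hcross : (∑ t ∈ Sᶜ, ∑ s ∈ S, Finsupp.single ((insert t S).erase s)
        (q * htpyEntry 𝕜 v g S t * taylorEntry 𝕜 v (insert t S) s))
      + ∑ s ∈ S, ∑ t ∈ Sᶜ, Finsupp.single (insert t (S.erase s))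
        (q * taylorEntry 𝕜 v S s * htpyEntry 𝕜 v g (S.erase s) t) = 0 := by
    rw [Finset.sum_comm (s := S)]
    rw [← Finset.sum_add_distrib]
    apply Finset.sum_eq_zero
    intro t ht
    rw [Finset.mem_compl] at ht
    rw [← Finset.sum_add_distrib]
    apply Finset.sum_eq_zero
    intro s hs
    have hne : t ≠ s := fun h => ht (h ▸ hs)
    rw [Finset.erase_insert_of_ne hne, ← Finsupp.single_add]
    have hc : q * htpyEntry 𝕜 v g S t * taylorEntry 𝕜 v (insert t S) s
        + q * taylorEntry 𝕜 v S s * htpyEntry 𝕜 v g (S.erase s) t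
        = q * (htpyEntry 𝕜 v g S t * taylorEntry 𝕜 v (insert t S) s
            + taylorEntry 𝕜 v S s * htpyEntry 𝕜 v g (S.erase s) t) := by ring
    rw [hc, cross_cancel 𝕜 hs ht, mul_zero, Finsupp.single_zero]
  have hdiag : (∑ t ∈ Sᶜ, Finsupp.single S (q * (g t * monomial (v t) 1)))
      + ∑ s ∈ S, Finsupp.single S (q * (g s * monomial (v s) 1))
      = Finsupp.single S ((∑ j : Fin r, g j * monomial (v j) 1) * q) := by
    rw [Finset.sum_compl_add_sum S
      (fun j => Finsupp.single S (q * (g j * monomial (v j) 1)))]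
    rw [show (∑ i : Fin r, Finsupp.single S (q * (g i * monomial (v i) 1)))
        = Finsupp.single S (∑ i : Fin r, q * (g i * monomial (v i) 1)) from
      (map_sum (Finsupp.singleAddHom S) _ Finset.univ).symm]
    congr 1
    rw [Finset.sum_mul]
    apply Finset.sum_congr rfl
    intro j _
    ring
  calc ((∑ t ∈ Sᶜ, Finsupp.single S (q * (g t * monomial (v t) 1)))
          + ∑ t ∈ Sᶜ, ∑ s ∈ S, Finsupp.single ((insert t S).erase s)
            (q * htpyEntry 𝕜 v g S t * taylorEntry 𝕜 v (insert t S) s))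
        + ((∑ s ∈ S, Finsupp.single S (q * (g s * monomial (v s) 1)))
          + ∑ s ∈ S, ∑ t ∈ Sᶜ, Finsupp.single (insert t (S.erase s))
            (q * taylorEntry 𝕜 v S s * htpyEntry 𝕜 v g (S.erase s) t))
      = ((∑ t ∈ Sᶜ, Finsupp.single S (q * (g t * monomial (v t) 1)))
          + ∑ s ∈ S, Finsupp.single S (q * (g s * monomial (v s) 1)))
        + ((∑ t ∈ Sᶜ, ∑ s ∈ S, Finsupp.single ((insert t S).erase s)
            (q * htpyEntry 𝕜 v g S t * taylorEntry 𝕜 v (insert t S) s))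
          + ∑ s ∈ S, ∑ t ∈ Sᶜ, Finsupp.single (insert t (S.erase s))
            (q * taylorEntry 𝕜 v S s * htpyEntry 𝕜 v g (S.erase s) t)) := by abel
    _ = Finsupp.single S ((∑ j : Fin r, g j * monomial (v j) 1) * q) := by
        rw [hcross, hdiag, add_zero]
    _ = ((∑ j : Fin r, g j * monomial (v j) 1) • LinearMap.id)
          (Finsupp.single S q) := by
        rw [LinearMap.smul_apply, LinearMap.id_apply, Finsupp.smul_single, smul_eq_mul]

end Aux5
section Aux6

open Finset

theorem htpy_sq (v : Fin r → (Fin n →₀ ℕ)) (g : Fin r → MvPolynomial (Fin n) 𝕜) :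
    taylorHtpy 𝕜 v g ∘ₗ taylorHtpy 𝕜 v g = 0 := by
  apply Finsupp.lhom_ext
  intro S q
  rw [LinearMap.comp_apply, taylorHtpy_single, map_sum]
  simp only [taylorHtpy_single]
  rw [Finset.sum_sigma' Sᶜ (fun t => (insert t S)ᶜ)
    (fun t t' => Finsupp.single (insert t' (insert t S))
      (q * htpyEntry 𝕜 v g S t * htpyEntry 𝕜 v g (insert t S) t'))]
  rw [LinearMap.zero_apply]
  refine Finset.sum_involution (fun x _ => ⟨x.2, x.1⟩) ?_ ?_ ?_ ?_
  · intro x hx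
    rw [Finset.mem_sigma, Finset.mem_compl, Finset.mem_compl] at hx
    obtain ⟨ht, ht'⟩ := hx
    have hz : q * htpyEntry 𝕜 v g S x.1 * htpyEntry 𝕜 v g (insert x.1 S) x.2
        + q * htpyEntry 𝕜 v g S x.2 * htpyEntry 𝕜 v g (insert x.2 S) x.1 = 0 := by
      have u := hE_anticomm 𝕜 (v := v) (g := g) (h := g) ht ht'
      linear_combination q * u
    rw [Finset.insert_comm x.1 x.2 S, ← Finsupp.single_add, hz, Finsupp.single_zero]
  · intro x hx _
    rw [Finset.mem_sigma, Finset.mem_compl, Finset.mem_compl] at hx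
    intro hcon
    have h12 : x.2 = x.1 := congrArg Sigma.fst hcon
    exact hx.2 (by rw [h12]; exact Finset.mem_insert_self _ _)
  · intro x hx
    rw [Finset.mem_sigma, Finset.mem_compl, Finset.mem_compl] at hx ⊢
    refine ⟨fun hc => hx.2 (Finset.mem_insert_of_mem hc), fun hc => ?_⟩
    dsimp only at hc
    rcases Finset.mem_insert.1 hc with h | h
    · exact hx.2 (by rw [← h]; exact Finset.mem_insert_self _ _)
    · exact hx.1 h
  · intro x hx
    rfl

theorem htpy_anticomm (v : Fin r → (Fin n →₀ ℕ))
    (g h : Fin r → MvPolynomial (Fin n) 𝕜) :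
    taylorHtpy 𝕜 v g ∘ₗ taylorHtpy 𝕜 v h + taylorHtpy 𝕜 v h ∘ₗ taylorHtpy 𝕜 v g = 0 := by
  apply Finsupp.lhom_ext
  intro S q
  rw [LinearMap.add_apply, LinearMap.comp_apply, LinearMap.comp_apply,
    taylorHtpy_single, taylorHtpy_single, map_sum, map_sum]
  simp only [taylorHtpy_single]
  rw [Finset.sum_sigma' Sᶜ (fun t => (insert t S)ᶜ)
    (fun t t' => Finsupp.single (insert t' (insert t S))
      (q * htpyEntry 𝕜 v h S t * htpyEntry 𝕜 v g (insert t S) t'))]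
  rw [Finset.sum_sigma' Sᶜ (fun t => (insert t S)ᶜ)
    (fun t t' => Finsupp.single (insert t' (insert t S))
      (q * htpyEntry 𝕜 v g S t * htpyEntry 𝕜 v h (insert t S) t'))]
  rw [← Finset.sum_add_distrib, LinearMap.zero_apply]
  refine Finset.sum_involution (fun x _ => ⟨x.2, x.1⟩) ?_ ?_ ?_ ?_
  · intro x hx
    rw [Finset.mem_sigma, Finset.mem_compl, Finset.mem_compl] at hx
    obtain ⟨ht, ht'⟩ := hx
    have hz : (q * htpyEntry 𝕜 v h S x.1 * htpyEntry 𝕜 v g (insert x.1 S) x.2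
        + q * htpyEntry 𝕜 v g S x.1 * htpyEntry 𝕜 v h (insert x.1 S) x.2)
        + (q * htpyEntry 𝕜 v h S x.2 * htpyEntry 𝕜 v g (insert x.2 S) x.1
        + q * htpyEntry 𝕜 v g S x.2 * htpyEntry 𝕜 v h (insert x.2 S) x.1) = 0 := by
      have u1 := hE_anticomm 𝕜 (v := v) (g := h) (h := g) ht ht'
      have u2 := hE_anticomm 𝕜 (v := v) (g := g) (h := h) ht ht'
      linear_combination q * u1 + q * u2
    rw [Finset.insert_comm x.1 x.2 S, ← Finsupp.single_add, ← Finsupp.single_add,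
      ← Finsupp.single_add, hz, Finsupp.single_zero]
  · intro x hx _
    rw [Finset.mem_sigma, Finset.mem_compl, Finset.mem_compl] at hx
    intro hcon
    have h12 : x.2 = x.1 := congrArg Sigma.fst hcon
    exact hx.2 (by rw [h12]; exact Finset.mem_insert_self _ _)
  · intro x hx
    rw [Finset.mem_sigma, Finset.mem_compl, Finset.mem_compl] at hx ⊢
    refine ⟨fun hc => hx.2 (Finset.mem_insert_of_mem hc), fun hc => ?_⟩
    dsimp only at hc
    rcases Finset.mem_insert.1 hc with h | h
    · exact hx.2 (by rw [← h]; exact Finset.mem_insert_self _ _)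
    · exact hx.1 h
  · intro x hx
    rfl

theorem htpy_convex (v : Fin r → (Fin n →₀ ℕ)) (f f' : Fin r → MvPolynomial (Fin n) 𝕜)
    (c c' : MvPolynomial (Fin n) 𝕜) :
    c • taylorHtpy 𝕜 v f + c' • taylorHtpy 𝕜 v f'
      = taylorHtpy 𝕜 v (fun j => c * f j + c' * f' j) := by
  apply Finsupp.lhom_ext
  intro S q
  rw [LinearMap.add_apply, LinearMap.smul_apply, LinearMap.smul_apply,
    taylorHtpy_single, taylorHtpy_single, taylorHtpy_single,
    Finset.smul_sum, Finset.smul_sum, ← Finset.sum_add_distrib]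
  apply Finset.sum_congr rfl
  intro t _
  rw [Finsupp.smul_single, Finsupp.smul_single, smul_eq_mul, smul_eq_mul,
    ← Finsupp.single_add]
  congr 1
  unfold htpyEntry
  ring

end Aux6
section Aux7

open Finset

lemma lm_sum_comp {R M : Type*} [CommRing R] [AddCommGroup M] [Module R M] {ι : Type*}
    (s : Finset ι) (f : ι → M →ₗ[R] M) (g : M →ₗ[R] M) :
    (∑ i ∈ s, f i) ∘ₗ g = ∑ i ∈ s, f i ∘ₗ g := by
  ext x; simp [LinearMap.sum_apply, LinearMap.comp_apply]

lemma lm_comp_sum {R M : Type*} [CommRing R] [AddCommGroup M] [Module R M] {ι : Type*}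
    (s : Finset ι) (f : ι → M →ₗ[R] M) (g : M →ₗ[R] M) :
    g ∘ₗ (∑ i ∈ s, f i) = ∑ i ∈ s, g ∘ₗ f i := by
  ext x; simp [LinearMap.sum_apply, LinearMap.comp_apply, map_sum]

lemma homotopySystem_term {c : ℕ} (v : Fin r → (Fin n →₀ ℕ))
    (σs : Fin c → (TaylorModule 𝕜 n r →ₗ[MvPolynomial (Fin n) 𝕜] TaylorModule 𝕜 n r))
    (u : Fin c →₀ ℕ) (hu : 2 ≤ u.sum (fun _ x => x))
    (p : (Fin c →₀ ℕ) × (Fin c →₀ ℕ)) (hp : p ∈ Finset.HasAntidiagonal.antidiagonal u) :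
    homotopySystem (𝕜 := 𝕜) v σs p.1 ∘ₗ homotopySystem (𝕜 := 𝕜) v σs p.2
      = ∑ i : Fin c, ∑ j : Fin c,
          if p = (Finsupp.single i 1, Finsupp.single j 1) then σs i ∘ₗ σs j else 0 := by
  rw [Finset.HasAntidiagonal.mem_antidiagonal] at hp
  have hsum1 : ∀ i : Fin c, ((Finsupp.single i 1 : Fin c →₀ ℕ).sum fun _ x => x) = 1 :=
    fun i => Finsupp.sum_single_index rfl
  have husum : (p.1.sum fun _ x => x) + (p.2.sum fun _ x => x) = u.sum fun _ x => x := by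
    rw [← hp]
    exact (Finsupp.sum_add_index' (fun _ => rfl) (fun _ _ _ => rfl)).symm
  have hne0 : ∀ w : Fin c →₀ ℕ, (w.sum fun _ x => x) = (u.sum fun _ x => x) →
      (∑ i : Fin c, if w = Finsupp.single i 1 then σs i else 0) = 0 := by
    intro w hw
    apply Finset.sum_eq_zero
    intro i _
    rw [if_neg]
    intro hcon
    rw [hcon, hsum1 i] at hw
    omega
  by_cases h1 : p.1 = 0
  · have hp2 : p.2 = u := by rw [← hp, h1, zero_add]
    have hne : p.2 ≠ 0 := by
      rw [hp2]
      intro hcon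
      rw [hcon] at hu
      simp at hu
    have hH2 : homotopySystem (𝕜 := 𝕜) v σs p.2 = 0 := by
      rw [homotopySystem, if_neg hne]
      exact hne0 p.2 (by rw [hp2])
    rw [hH2, LinearMap.comp_zero]
    symm
    apply Finset.sum_eq_zero; intro i _
    apply Finset.sum_eq_zero; intro j _
    rw [if_neg]
    intro hcon
    have h1' : p.1 = Finsupp.single i 1 := congrArg Prod.fst hcon
    exact one_ne_zero (Finsupp.single_eq_zero.1 (h1'.symm.trans h1))
  · by_cases h2 : p.2 = 0
    · have hp1 : p.1 = u := by rw [← hp, h2, add_zero]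
      have hH1 : homotopySystem (𝕜 := 𝕜) v σs p.1 = 0 := by
        rw [homotopySystem, if_neg h1]
        exact hne0 p.1 (by rw [hp1])
      rw [hH1, LinearMap.zero_comp]
      symm
      apply Finset.sum_eq_zero; intro i _
      apply Finset.sum_eq_zero; intro j _
      rw [if_neg]
      intro hcon
      have h2' : p.2 = Finsupp.single j 1 := congrArg Prod.snd hcon
      exact one_ne_zero (Finsupp.single_eq_zero.1 (h2'.symm.trans h2))
    · simp only [homotopySystem, if_neg h1, if_neg h2]
      rw [lm_sum_comp]
      apply Finset.sum_congr rfl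
      intro i _
      rw [lm_comp_sum]
      apply Finset.sum_congr rfl
      intro j _
      by_cases hi : p.1 = Finsupp.single i 1 <;> by_cases hj : p.2 = Finsupp.single j 1
      · rw [if_pos hi, if_pos hj, if_pos (Prod.ext_iff.2 ⟨hi, hj⟩)]
      · rw [if_pos hi, if_neg hj, LinearMap.comp_zero,
          if_neg (fun hcon => hj (congrArg Prod.snd hcon))]
      · rw [if_neg hi, LinearMap.zero_comp,
          if_neg (fun hcon => hi (congrArg Prod.fst hcon))]
      · rw [if_neg hi, LinearMap.zero_comp,
          if_neg (fun hcon => hi (congrArg Prod.fst hcon))]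

lemma homotopySystem_sum {c : ℕ} (v : Fin r → (Fin n →₀ ℕ))
    (σs : Fin c → (TaylorModule 𝕜 n r →ₗ[MvPolynomial (Fin n) 𝕜] TaylorModule 𝕜 n r))
    (hanti : ∀ i j : Fin c, σs i ∘ₗ σs j + σs j ∘ₗ σs i = 0)
    (hsq : ∀ i : Fin c, σs i ∘ₗ σs i = 0)
    (u : Fin c →₀ ℕ) (hu : 2 ≤ u.sum (fun _ x => x)) :
    ∑ p ∈ Finset.HasAntidiagonal.antidiagonal u,
      homotopySystem (𝕜 := 𝕜) v σs p.1 ∘ₗ homotopySystem (𝕜 := 𝕜) v σs p.2 = 0 := by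
  rw [Finset.sum_congr rfl (homotopySystem_term 𝕜 v σs u hu)]
  have hswap : (∑ p ∈ Finset.HasAntidiagonal.antidiagonal u, ∑ i : Fin c, ∑ j : Fin c,
      if p = (Finsupp.single i 1, Finsupp.single j 1) then σs i ∘ₗ σs j else 0)
      = ∑ i : Fin c, ∑ j : Fin c, ∑ p ∈ Finset.HasAntidiagonal.antidiagonal u,
        if p = (Finsupp.single i 1, Finsupp.single j 1) then σs i ∘ₗ σs j else 0 := by
    rw [Finset.sum_comm]
    apply Finset.sum_congr rfl
    intro i _
    rw [Finset.sum_comm]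
  rw [hswap]
  have hinner : ∀ i j : Fin c, (∑ p ∈ Finset.HasAntidiagonal.antidiagonal u,
      if p = (Finsupp.single i 1, Finsupp.single j 1) then σs i ∘ₗ σs j else 0)
      = if Finsupp.single i 1 + Finsupp.single j 1 = u then σs i ∘ₗ σs j else 0 := by
    intro i j
    rw [Finset.sum_ite_eq' (Finset.HasAntidiagonal.antidiagonal u)
      ((Finsupp.single i 1, Finsupp.single j 1)) (fun _ => σs i ∘ₗ σs j)]
    simp only [Finset.HasAntidiagonal.mem_antidiagonal]
  rw [Finset.sum_congr rfl (fun i _ => Finset.sum_congr rfl (fun j _ => hinner i j))]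
  rw [← Finset.sum_product' (s := Finset.univ) (t := Finset.univ)]
  refine Finset.sum_involution (fun x _ => (x.2, x.1)) ?_ ?_ ?_ ?_
  · intro x _
    by_cases hcnd : Finsupp.single x.1 1 + Finsupp.single x.2 1 = u
    · rw [if_pos hcnd, if_pos (by rwa [add_comm] : Finsupp.single x.2 1 + Finsupp.single x.1 1 = u)]
      exact hanti x.1 x.2
    · rw [if_neg hcnd, if_neg (fun hcon => hcnd (by rwa [add_comm] at hcon)), add_zero]
  · intro x _ hF hcon
    have h12 : x.2 = x.1 := congrArg Prod.fst hcon
    apply hF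
    rw [h12]
    by_cases hcnd : Finsupp.single x.1 1 + Finsupp.single x.1 1 = u
    · rw [if_pos hcnd]
      exact hsq x.1
    · rw [if_neg hcnd]
  · intro x _
    simp
  · intro x _
    rfl

end Aux7
/-- Convex combinations of Taylor homotopies are again systems of higher
homotopies: if `a_i = Σ_j f_{i,j} m_j = Σ_j f'_{i,j} m_j` and `λ ∈ 𝕜`, then for each `i` the
map `λ·σᶠᵢ + (1−λ)·σᶠ'ᵢ` equals `σᵍᵢ` where `g_{i,j} = λ f_{i,j} + (1−λ) f'_{i,j}`, and the
collection with `σ_𝟎 = τ`, `σ_{e_i} = λ·σᶠᵢ + (1−λ)·σᶠ'ᵢ`, and `σ_u = 0` for `|u| ≥ 2` is a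
system of higher homotopies for `a₁,…,a_c` on the Taylor complex: `τ∘τ = 0`,
`τ∘σ_{e_j} + σ_{e_j}∘τ = a_j · id` for each `j`, and `Σ_{b+b'=u} σ_b∘σ_{b'} = 0` for
`|u| ≥ 2`. Here `m_j = x^{v j}`. -/
theorem convex_combination_of_homotopies {𝕜 : Type*} [Field 𝕜] {n r c : ℕ}
    (v : Fin r → (Fin n →₀ ℕ)) (a : Fin c → MvPolynomial (Fin n) 𝕜)
    (f f' : Fin c → Fin r → MvPolynomial (Fin n) 𝕜)
    (ha : ∀ i, a i = ∑ j : Fin r, f i j * monomial (v j) 1)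
    (ha' : ∀ i, a i = ∑ j : Fin r, f' i j * monomial (v j) 1)
    (lam : 𝕜) :
    (∀ i : Fin c,
      (C lam : MvPolynomial (Fin n) 𝕜) • taylorHtpy 𝕜 v (f i) + (C (1 - lam) : MvPolynomial (Fin n) 𝕜) • taylorHtpy 𝕜 v (f' i) =
        taylorHtpy 𝕜 v (fun j => C lam * f i j + C (1 - lam) * f' i j)) ∧
    (taylorTau 𝕜 v ∘ₗ taylorTau 𝕜 v = 0) ∧
    (∀ j : Fin c,
      taylorTau 𝕜 v ∘ₗ
          ((C lam : MvPolynomial (Fin n) 𝕜) • taylorHtpy 𝕜 v (f j) +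
            (C (1 - lam) : MvPolynomial (Fin n) 𝕜) • taylorHtpy 𝕜 v (f' j)) +
        ((C lam : MvPolynomial (Fin n) 𝕜) • taylorHtpy 𝕜 v (f j) +
            (C (1 - lam) : MvPolynomial (Fin n) 𝕜) • taylorHtpy 𝕜 v (f' j)) ∘ₗ
          taylorTau 𝕜 v =
        a j • LinearMap.id) ∧
    (∀ u : Fin c →₀ ℕ, 2 ≤ u.sum (fun _ x => x) →
      ∑ p ∈ Finset.HasAntidiagonal.antidiagonal u,
        homotopySystem (𝕜 := 𝕜) v
            (fun i => (C lam : MvPolynomial (Fin n) 𝕜) • taylorHtpy 𝕜 v (f i) + (C (1 - lam) : MvPolynomial (Fin n) 𝕜) • taylorHtpy 𝕜 v (f' i))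
            p.1 ∘ₗ
          homotopySystem (𝕜 := 𝕜) v
            (fun i => (C lam : MvPolynomial (Fin n) 𝕜) • taylorHtpy 𝕜 v (f i) + (C (1 - lam) : MvPolynomial (Fin n) 𝕜) • taylorHtpy 𝕜 v (f' i))
            p.2 = 0) := by
  have hconv : ∀ i : Fin c,
      (C lam : MvPolynomial (Fin n) 𝕜) • taylorHtpy 𝕜 v (f i)
          + (C (1 - lam) : MvPolynomial (Fin n) 𝕜) • taylorHtpy 𝕜 v (f' i)
        = taylorHtpy 𝕜 v (fun j => C lam * f i j + C (1 - lam) * f' i j) :=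
    fun i => htpy_convex 𝕜 v (f i) (f' i) _ _
  refine ⟨hconv, tau_comp_tau 𝕜 v, ?_, ?_⟩
  · intro j
    rw [hconv j, tau_htpy 𝕜 v]
    have hsum : (∑ t : Fin r, (C lam * f j t + C (1 - lam) * f' j t) * monomial (v t) 1)
        = a j := by
      calc (∑ t : Fin r, (C lam * f j t + C (1 - lam) * f' j t) * monomial (v t) 1)
          = C lam * (∑ t : Fin r, f j t * monomial (v t) 1)
            + C (1 - lam) * (∑ t : Fin r, f' j t * monomial (v t) 1) := by
            rw [Finset.mul_sum, Finset.mul_sum, ← Finset.sum_add_distrib]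
            exact Finset.sum_congr rfl fun t _ => by ring
        _ = a j := by
            rw [← ha j, ← ha' j, ← add_mul, ← C_add]
            have h1 : lam + (1 - lam) = 1 := by ring
            rw [h1, C_1, one_mul]
    rw [hsum]
  · intro u hu
    have hrw : ∀ p ∈ Finset.HasAntidiagonal.antidiagonal u,
        (homotopySystem (𝕜 := 𝕜) v
            (fun i => (C lam : MvPolynomial (Fin n) 𝕜) • taylorHtpy 𝕜 v (f i)
              + (C (1 - lam) : MvPolynomial (Fin n) 𝕜) • taylorHtpy 𝕜 v (f' i)) p.1 ∘ₗ
          homotopySystem (𝕜 := 𝕜) v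
            (fun i => (C lam : MvPolynomial (Fin n) 𝕜) • taylorHtpy 𝕜 v (f i)
              + (C (1 - lam) : MvPolynomial (Fin n) 𝕜) • taylorHtpy 𝕜 v (f' i)) p.2)
        = homotopySystem (𝕜 := 𝕜) v
            (fun i => taylorHtpy 𝕜 v (fun j => C lam * f i j + C (1 - lam) * f' i j)) p.1 ∘ₗ
          homotopySystem (𝕜 := 𝕜) v
            (fun i => taylorHtpy 𝕜 v (fun j => C lam * f i j + C (1 - lam) * f' i j)) p.2 := by
      intro p _
      congr 1 <;>
      · congr 1
        funext i
        exact hconv i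
    rw [Finset.sum_congr rfl hrw]
    exact homotopySystem_sum 𝕜 v _
      (fun i j => htpy_anticomm 𝕜 v _ _) (fun i => htpy_sq 𝕜 v _) u hu
end

section
/- In Q = 𝕜[x,y,z], the 4×4 matrices A = [[x², y², z², 0], [x, −z, 0, z²], [0, 0, −z, −y²], [0, 0, −x, x²]] and B = [[z, y², z², 0], [x, −x², 0, z²], [0, 0, −x², −y²], [0, 0, −x, z]] satisfy A·B = (x²z + xy²)·I₄ and B·A = (x²z + xy²)·I₄; that is, (A, B) is a matrix factorization of x²z + xy². -/
open MvPolynomial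

set_option maxHeartbeats 1000000 in
/-- In `Q = 𝕜[x,y,z]`, the matrices
`A = [[x², y², z², 0], [x, −z, 0, z²], [0, 0, −z, −y²], [0, 0, −x, x²]]` and
`B = [[z, y², z², 0], [x, −x², 0, z²], [0, 0, −x², −y²], [0, 0, −x, z]]` satisfy
`A·B = (x²z + xy²)·I₄` and `B·A = (x²z + xy²)·I₄`, i.e. `(A, B)` is a matrix factorization
of `x²z + xy²`. -/
theorem matrix_factorization_example {𝕜 : Type*} [Field 𝕜] :
    let x : MvPolynomial (Fin 3) 𝕜 := X 0
    let y : MvPolynomial (Fin 3) 𝕜 := X 1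
    let z : MvPolynomial (Fin 3) 𝕜 := X 2
    let A : Matrix (Fin 4) (Fin 4) (MvPolynomial (Fin 3) 𝕜) :=
      !![x^2, y^2, z^2, 0;
         x,   -z,  0,   z^2;
         0,   0,   -z,  -y^2;
         0,   0,   -x,  x^2]
    let B : Matrix (Fin 4) (Fin 4) (MvPolynomial (Fin 3) 𝕜) :=
      !![z, y^2,  z^2,  0;
         x, -x^2, 0,    z^2;
         0, 0,    -x^2, -y^2;
         0, 0,    -x,   z]
    A * B = (x^2 * z + x * y^2) • (1 : Matrix (Fin 4) (Fin 4) (MvPolynomial (Fin 3) 𝕜)) ∧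
    B * A = (x^2 * z + x * y^2) • (1 : Matrix (Fin 4) (Fin 4) (MvPolynomial (Fin 3) 𝕜)) := by
  intro x y z A B
  constructor <;>
  · ext i j
    fin_cases i <;> fin_cases j <;>
      simp [A, B, Matrix.mul_apply, Fin.sum_univ_succ, Matrix.one_apply] <;> ring
end
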